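/- Knowledge gain (Goubault–Ledent–Rajsbaum): if f : M → M' is a morphism between simplicial models, then for every facet X of M and every positive epistemic formula φ in L_K^+, if M', f(X) ⊨ φ then M, X ⊨ φ. -/

import Mathlib

/-- A simplicial model: a pure chromatic simplicial complex, colored by the
agents in `Agent`, whose vertices are labeled by sets of atomic propositions.
Each atomic proposition belongs to an agent (`agentOf`), and the label of a
vertex only contains atoms of the color of that vertex. -/
structure SimplicialModel (Agent Atom Vertex : Type) [Fintype Agent]
    [DecidableEq Vertex] where
  simplices : Set (Finset Vertex)
  chi : Vertex → Agent
  label : Vertex → Set Atom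
  agentOf : Atom → Agent
  simplex_nonempty : ∀ X ∈ simplices, X.Nonempty
  down_closed : ∀ X ∈ simplices, ∀ Y : Finset Vertex, Y ⊆ X → Y.Nonempty → Y ∈ simplices
  chi_injOn : ∀ X ∈ simplices, Set.InjOn chi ↑X
  pure : ∀ X ∈ simplices, ∃ F ∈ simplices, X ⊆ F ∧ F.card = Fintype.card Agent
  label_agent : ∀ v, ∀ p ∈ label v, agentOf p = chi v

namespace SimplicialModel

variable {Agent Atom Vertex Vertex' : Type} [Fintype Agent]
  [DecidableEq Vertex] [DecidableEq Vertex']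

/-- The facets (maximal simplices) of a simplicial model: the simplices with
exactly `|Agent|` vertices. -/
def facets (M : SimplicialModel Agent Atom Vertex) : Set (Finset Vertex) :=
  {X ∈ M.simplices | X.card = Fintype.card Agent}

/-- The type of facets of a simplicial model. -/
def Facet (M : SimplicialModel Agent Atom Vertex) : Type := {X : Finset Vertex // X ∈ M.facets}

/-- The labeling of a facet: union of the labels of its vertices. -/
def flabel (M : SimplicialModel Agent Atom Vertex) (X : M.Facet) : Set Atom :=
  ⋃ v ∈ (X.1 : Finset Vertex), M.label v

/-- `χ(X ∩ Y)`: the set of colors of the common vertices of two facets. -/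
def chiInter (M : SimplicialModel Agent Atom Vertex) (X Y : M.Facet) : Set Agent :=
  M.chi '' ↑(X.1 ∩ Y.1)

/-- The indistinguishability relation `X ∼ₐ Y` : `a ∈ χ(X ∩ Y)`. -/
def indist (M : SimplicialModel Agent Atom Vertex) (a : Agent) (X Y : M.Facet) : Prop :=
  a ∈ M.chiInter X Y

/-- A morphism of simplicial models: maps simplices to simplices, preserves
colors and preserves labels. -/
def IsMorphism (M : SimplicialModel Agent Atom Vertex) (M' : SimplicialModel Agent Atom Vertex')
    (f : Vertex → Vertex') : Prop :=
  (∀ X ∈ M.simplices, X.image f ∈ M'.simplices) ∧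
  (∀ v, M'.chi (f v) = M.chi v) ∧
  (∀ v, M'.label (f v) = M.label v)

/-- Smart constructor for a simplicial model: the complex generated by a given
set of facets, each of which has `|Agent|` vertices with pairwise distinct colors. -/
def ofFacets [Nonempty Agent] (Fs : Set (Finset Vertex)) (chi : Vertex → Agent)
    (label : Vertex → Set Atom) (agentOf : Atom → Agent)
    (hcard : ∀ F ∈ Fs, F.card = Fintype.card Agent)
    (hinj : ∀ F ∈ Fs, Set.InjOn chi ↑F)
    (hlab : ∀ v, ∀ p ∈ label v, agentOf p = chi v) :
    SimplicialModel Agent Atom Vertex where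
  simplices := {X | X.Nonempty ∧ ∃ F ∈ Fs, X ⊆ F}
  chi := chi
  label := label
  agentOf := agentOf
  simplex_nonempty := fun _ hX => hX.1
  down_closed := by
    rintro X ⟨-, F, hF, hXF⟩ Y hYX hY
    exact ⟨hY, F, hF, hYX.trans hXF⟩
  chi_injOn := by
    rintro X ⟨-, F, hF, hXF⟩
    exact (hinj F hF).mono (Finset.coe_subset.mpr hXF)
  pure := by
    rintro X ⟨-, F, hF, hXF⟩
    refine ⟨F, ⟨?_, F, hF, subset_rfl⟩, hXF, hcard F hF⟩
    rw [← Finset.card_pos, hcard F hF]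
    exact Fintype.card_pos
  label_agent := hlab

end SimplicialModel

/-- The language `L_K⁺` of positive epistemic formulas:
`φ ::= p | ¬p | φ ∨ φ | φ ∧ φ | K_a φ`. -/
inductive PosFormula (Agent Atom : Type) : Type where
  | atom : Atom → PosFormula Agent Atom
  | natom : Atom → PosFormula Agent Atom
  | or : PosFormula Agent Atom → PosFormula Agent Atom → PosFormula Agent Atom
  | and : PosFormula Agent Atom → PosFormula Agent Atom → PosFormula Agent Atom
  | know : Agent → PosFormula Agent Atom → PosFormula Agent Atom

/-- The language `L_D⁺` of positive epistemic formulas with distributed knowledge: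
`φ ::= p | ¬p | φ ∨ φ | φ ∧ φ | D_A φ`. -/
inductive PosFormulaD (Agent Atom : Type) : Type where
  | atom : Atom → PosFormulaD Agent Atom
  | natom : Atom → PosFormulaD Agent Atom
  | or : PosFormulaD Agent Atom → PosFormulaD Agent Atom → PosFormulaD Agent Atom
  | and : PosFormulaD Agent Atom → PosFormulaD Agent Atom → PosFormulaD Agent Atom
  | dknow : Set Agent → PosFormulaD Agent Atom → PosFormulaD Agent Atom

namespace SimplicialModel

variable {Agent Atom Vertex Vertex' : Type} [Fintype Agent]
  [DecidableEq Vertex] [DecidableEq Vertex']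

/-- Truth of a positive formula of `L_K⁺` at a facet of a simplicial model. -/
def satK (M : SimplicialModel Agent Atom Vertex) :
    PosFormula Agent Atom → M.Facet → Prop
  | .atom p, X => p ∈ M.flabel X
  | .natom p, X => p ∉ M.flabel X
  | .or φ ψ, X => M.satK φ X ∨ M.satK ψ X
  | .and φ ψ, X => M.satK φ X ∧ M.satK ψ X
  | .know a φ, X => ∀ Y : M.Facet, M.indist a X Y → M.satK φ Y

/-- Truth of a positive formula of `L_D⁺` at a facet of a simplicial model. -/
def satD (M : SimplicialModel Agent Atom Vertex) :
    PosFormulaD Agent Atom → M.Facet → Prop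
  | .atom p, X => p ∈ M.flabel X
  | .natom p, X => p ∉ M.flabel X
  | .or φ ψ, X => M.satD φ X ∨ M.satD ψ X
  | .and φ ψ, X => M.satD φ X ∧ M.satD ψ X
  | .dknow A φ, X => ∀ Y : M.Facet, A ⊆ M.chiInter X Y → M.satD φ Y

/-- A K-simulation of `M` by `M'`: (Atom) related facets have the same labels;
(Forth) if `X R X'` and `X ∼ₐ Y` then there is `Y'` with `Y R Y'` and `X' ∼ₐ Y'`. -/
def IsKSimulation (M : SimplicialModel Agent Atom Vertex) (M' : SimplicialModel Agent Atom Vertex')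
    (R : M.Facet → M'.Facet → Prop) : Prop :=
  (∀ X X', R X X' → M.flabel X = M'.flabel X') ∧
  (∀ (a : Agent) X Y X', R X X' → M.indist a X Y →
    ∃ Y', R Y Y' ∧ M'.indist a X' Y')

/-- A D-simulation of `M` by `M'`: (Atom) related facets have the same labels;
(D-Forth) if `X R X'` then for every facet `Y` there is `Y'` with `Y R Y'` and
`χ(X ∩ Y) ⊆ χ'(X' ∩ Y')`. -/
def IsDSimulation (M : SimplicialModel Agent Atom Vertex) (M' : SimplicialModel Agent Atom Vertex')
    (R : M.Facet → M'.Facet → Prop) : Prop :=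
  (∀ X X', R X X' → M.flabel X = M'.flabel X') ∧
  (∀ X X', R X X' → ∀ Y, ∃ Y', R Y Y' ∧ M.chiInter X Y ⊆ M'.chiInter X' Y')

/-- A relation on facets is total if every facet of `M` is related to some facet of `M'`. -/
def TotalRel (M : SimplicialModel Agent Atom Vertex) (M' : SimplicialModel Agent Atom Vertex')
    (R : M.Facet → M'.Facet → Prop) : Prop :=
  ∀ X, ∃ X', R X X'

end SimplicialModel

/-- **Knowledge gain** (Goubault–Ledent–Rajsbaum): if `f : M → M'` is a morphism
between simplicial models, then for every facet `X` of `M` (with image facet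
`f(X)` of `M'`) and every positive epistemic formula `φ ∈ L_K⁺`,
`M', f(X) ⊨ φ` implies `M, X ⊨ φ`. -/
theorem knowledge_gain
    {Agent Atom Vertex Vertex' : Type} [Fintype Agent] [Nonempty Agent]
    [DecidableEq Vertex] [DecidableEq Vertex']
    (M : SimplicialModel Agent Atom Vertex) (M' : SimplicialModel Agent Atom Vertex')
    (f : Vertex → Vertex') (hf : SimplicialModel.IsMorphism M M' f)
    (X : M.Facet) (X' : M'.Facet) (hfX : (X'.1 : Finset Vertex') = X.1.image f)
    (φ : PosFormula Agent Atom) :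
    M'.satK φ X' → M.satK φ X := by
  obtain ⟨hsimp, hchi, hlab⟩ := hf
  have hflabel : ∀ (X : M.Facet) (X' : M'.Facet),
      (X'.1 : Finset Vertex') = X.1.image f → M.flabel X = M'.flabel X' := by
    intro X X' h
    ext p
    simp only [SimplicialModel.flabel, Set.mem_iUnion, h, Finset.mem_image]
    constructor
    · rintro ⟨v, hv, hp⟩
      exact ⟨f v, ⟨v, hv, rfl⟩, (hlab v).symm ▸ hp⟩
    · rintro ⟨w, ⟨v, hv, rfl⟩, hp⟩
      exact ⟨v, hv, (hlab v) ▸ hp⟩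
  induction φ generalizing X X' with
  | atom p => intro h; show p ∈ M.flabel X; rw [hflabel X X' hfX]; exact h
  | natom p => intro h; show p ∉ M.flabel X; rw [hflabel X X' hfX]; exact h
  | or φ ψ ih1 ih2 =>
    rintro (h | h)
    · exact Or.inl (ih1 X X' hfX h)
    · exact Or.inr (ih2 X X' hfX h)
  | and φ ψ ih1 ih2 =>
    rintro ⟨h1, h2⟩
    exact ⟨ih1 X X' hfX h1, ih2 X X' hfX h2⟩
  | know a φ ih =>
    intro h Y hXY
    -- build the facet f(Y)
    have hYs : Y.1.image f ∈ M'.simplices := hsimp Y.1 Y.2.1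
    have hinj : Set.InjOn f ↑Y.1 := by
      intro u hu v hv huv
      apply M.chi_injOn Y.1 Y.2.1 hu hv
      rw [← hchi u, ← hchi v, huv]
    have hcard : (Y.1.image f).card = Fintype.card Agent := by
      rw [Finset.card_image_of_injOn hinj]; exact Y.2.2
    let Y' : M'.Facet := ⟨Y.1.image f, hYs, hcard⟩
    apply ih Y Y' rfl
    apply h Y'
    -- indist a X' Y'
    obtain ⟨v, hv, hva⟩ := hXY
    refine ⟨f v, ?_, ?_⟩
    · have hv' := Finset.mem_coe.mp hv
      rw [Finset.mem_inter] at hv'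
      simp only [Finset.coe_inter, Set.mem_inter_iff, hfX, Finset.coe_image]
      exact ⟨⟨v, hv'.1, rfl⟩, (Finset.mem_image.mpr ⟨v, hv'.2, rfl⟩ : f v ∈ Y.1.image f)⟩
    · rw [hchi v]; exact hva
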